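/- Let n = p1⋯pk be a positive squarefree integer with n ≡ 1 (mod 8) and all prime factors p_i ≡ 1 (mod 4). Then the Monsky matrix M_n has rank 2k − 2 over F_2 if and only if the Rédei matrix R = (A | B) has rank k − 1 over F_2, where B = ([2/p_1], …, [2/p_k])^T. -/

import Mathlib

open Classical in
/-- The additive Legendre symbol `[a/p] ∈ F₂`: `0` if `a` is a square mod `p`, `1` otherwise. -/
noncomputable def aLeg (a : ℤ) (p : ℕ) : ZMod 2 :=
  if IsSquare ((a : ZMod p)) then 0 else 1

/-- The matrix `A`: `a_{ij} = [p_j/p_i]` for `i ≠ j` and `a_{ii} = Σ_{l ≠ i} [p_l/p_i]`. -/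
noncomputable def monskyA (k : ℕ) (p : Fin k → ℕ) : Matrix (Fin k) (Fin k) (ZMod 2) :=
  Matrix.of fun i j =>
    if i = j then ∑ l ∈ Finset.univ.filter (· ≠ i), aLeg (p l) (p i) else aLeg (p j) (p i)

/-- The diagonal matrix `D_u = diag([u/p₁], …, [u/p_k])`. -/
noncomputable def monskyD (k : ℕ) (p : Fin k → ℕ) (u : ℤ) : Matrix (Fin k) (Fin k) (ZMod 2) :=
  Matrix.diagonal fun i => aLeg u (p i)

/-- The Monsky matrix `M_n = [[A + D₋₂, D₂], [D₂, A + D₂]]`. -/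
noncomputable def monskyM (k : ℕ) (p : Fin k → ℕ) :
    Matrix (Fin k ⊕ Fin k) (Fin k ⊕ Fin k) (ZMod 2) :=
  Matrix.fromBlocks (monskyA k p + monskyD k p (-2)) (monskyD k p 2)
    (monskyD k p 2) (monskyA k p + monskyD k p 2)

/- ### Auxiliary number-theoretic lemmas -/

/-- indicator of `m % 8 = 5` -/
def e8 (m : ℕ) : ZMod 2 := if m % 8 = 5 then 1 else 0

lemma aLeg_symm' (p q : ℕ) (hp : p.Prime) (hq : q.Prime) (hp4 : p % 4 = 1) (hq4 : q % 4 = 1) :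
    aLeg q p = aLeg p q := by
  haveI : Fact p.Prime := ⟨hp⟩
  haveI : Fact q.Prime := ⟨hq⟩
  have hq2 : q ≠ 2 := by omega
  have h := ZMod.exists_sq_eq_prime_iff_of_mod_four_eq_one (p := p) (q := q) hp4 hq2
  have c1 : (((q : ℕ) : ℤ) : ZMod p) = ((q : ℕ) : ZMod p) := by push_cast; ring
  have c2 : (((p : ℕ) : ℤ) : ZMod q) = ((p : ℕ) : ZMod q) := by push_cast; ring
  unfold aLeg
  simp only [c1, c2]
  exact if_congr h rfl rfl

lemma aLeg_two (p : ℕ) (hp : p.Prime) (hp4 : p % 4 = 1) : aLeg 2 p = e8 p := by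
  haveI : Fact p.Prime := ⟨hp⟩
  have hp2 : p ≠ 2 := by omega
  have h := ZMod.exists_sq_eq_two_iff (p := p) hp2
  have hp8 : p % 8 = 1 ∨ p % 8 = 5 := by omega
  have c1 : ((2 : ℤ) : ZMod p) = (2 : ZMod p) := by push_cast; ring
  unfold aLeg e8
  simp only [c1]
  rcases hp8 with h8 | h8
  · have hs : IsSquare (2 : ZMod p) := h.mpr (Or.inl h8)
    rw [if_pos hs, h8]
    norm_num
  · have hs : ¬IsSquare (2 : ZMod p) := fun hs => by rcases h.mp hs with h' | h' <;> omega
    rw [if_neg hs, h8]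
    norm_num

lemma aLeg_neg_two (p : ℕ) (hp : p.Prime) (hp4 : p % 4 = 1) : aLeg (-2) p = aLeg 2 p := by
  haveI : Fact p.Prime := ⟨hp⟩
  have hp2 : p ≠ 2 := by omega
  have h2 := ZMod.exists_sq_eq_two_iff (p := p) hp2
  have hn2 := ZMod.exists_sq_eq_neg_two_iff (p := p) hp2
  have hp8 : p % 8 = 1 ∨ p % 8 = 5 := by omega
  have c1 : ((2 : ℤ) : ZMod p) = (2 : ZMod p) := by push_cast; ring
  have c2 : ((-2 : ℤ) : ZMod p) = (-2 : ZMod p) := by push_cast; ring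
  unfold aLeg
  simp only [c1, c2]
  rcases hp8 with h8 | h8
  · have hs : IsSquare (2 : ZMod p) := h2.mpr (Or.inl h8)
    have hs' : IsSquare (-2 : ZMod p) := hn2.mpr (Or.inl h8)
    rw [if_pos hs, if_pos hs']
  · have hs : ¬IsSquare (2 : ZMod p) := fun hs => by rcases h2.mp hs with h' | h' <;> omega
    have hs' : ¬IsSquare (-2 : ZMod p) := fun hs => by
      rcases hn2.mp hs with h' | h' <;> omega
    rw [if_neg hs, if_neg hs']

lemma e8_mul {a b : ℕ} (ha : a % 4 = 1) (hb : b % 4 = 1) : e8 (a * b) = e8 a + e8 b := by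
  have ha8 : a % 8 = 1 ∨ a % 8 = 5 := by omega
  have hb8 : b % 8 = 1 ∨ b % 8 = 5 := by omega
  have hm : (a * b) % 8 = (a % 8) * (b % 8) % 8 := Nat.mul_mod a b 8
  unfold e8
  rcases ha8 with h | h <;> rcases hb8 with h' | h' <;>
    rw [h, h'] at hm <;> norm_num at hm <;> simp [h, h', hm] <;> decide

lemma e8_prod {k : ℕ} (p : Fin k → ℕ) (hp4 : ∀ i, p i % 4 = 1) (s : Finset (Fin k)) :
    (∏ i ∈ s, p i) % 4 = 1 ∧ e8 (∏ i ∈ s, p i) = ∑ i ∈ s, e8 (p i) := by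
  classical
  induction s using Finset.induction_on with
  | empty => simp [e8]
  | insert _ _ h ih =>
    rename_i a s
    obtain ⟨ih1, ih2⟩ := ih
    rw [Finset.prod_insert h, Finset.sum_insert h]
    constructor
    · have := hp4 a
      have h2 : (p a * ∏ i ∈ s, p i) % 4 = (p a % 4) * ((∏ i ∈ s, p i) % 4) % 4 :=
        Nat.mul_mod _ _ 4
      rw [this, ih1] at h2
      omega
    · rw [e8_mul (hp4 a) ih1, ih2]

/- ### Auxiliary linear-algebra lemmas -/

section LinAlg

open Matrix Module LinearMap

variable {F : Type*} [Field F] {k : ℕ}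

lemma toDual_pi (v u : Fin k → F) : (Pi.basisFun F (Fin k)).toDual v u = v ⬝ᵥ u := by
  have h : ∀ x, (Pi.basisFun F (Fin k)).toDual v (Pi.single x 1) = v x := by
    intro x
    have := (Pi.basisFun F (Fin k)).toDual_eq_repr v x
    simpa using this
  conv_lhs => rw [← (Pi.basisFun F (Fin k)).sum_repr u]
  simp [h, dotProduct, mul_comm]

lemma dot_symm_mulVec (A : Matrix (Fin k) (Fin k) F) (hA : Aᵀ = A) (w u : Fin k → F) :
    A.mulVec w ⬝ᵥ u = w ⬝ᵥ A.mulVec u := by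
  conv_lhs => rw [← hA]
  rw [Matrix.mulVec_transpose, ← Matrix.dotProduct_mulVec]

lemma mem_range_of_symm (A : Matrix (Fin k) (Fin k) F) (hA : Aᵀ = A) (v : Fin k → F) :
    v ∈ LinearMap.range A.mulVecLin ↔ ∀ u ∈ LinearMap.ker A.mulVecLin, v ⬝ᵥ u = 0 := by
  constructor
  · rintro ⟨x, rfl⟩ u hu
    have hu' : A.mulVec u = 0 := hu
    show A.mulVec x ⬝ᵥ u = 0
    rw [dot_symm_mulVec A hA, hu', dotProduct_zero]
  · intro h
    set b := Pi.basisFun F (Fin k)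
    have hv : b.toDual v ∈ Submodule.dualAnnihilator (LinearMap.ker A.mulVecLin) := by
      rw [Submodule.mem_dualAnnihilator]
      intro u hu
      rw [toDual_pi]
      exact h u hu
    rw [← LinearMap.range_dualMap_eq_dualAnnihilator_ker] at hv
    obtain ⟨φ, hφ⟩ := hv
    obtain ⟨w, rfl⟩ := b.toDualEquiv.surjective φ
    refine ⟨w, b.toDualEquiv.injective ?_⟩
    rw [b.toDualEquiv_apply, b.toDualEquiv_apply, ← hφ, b.toDualEquiv_apply]
    refine LinearMap.ext fun u => ?_
    rw [LinearMap.dualMap_apply, toDual_pi, toDual_pi, Matrix.mulVecLin_apply,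
      Matrix.mulVecLin_apply, dot_symm_mulVec A hA]

variable {V : Type*} [AddCommGroup V] [Module F V] [FiniteDimensional F V]

lemma finrank_ker_phi (a d : V →ₗ[F] V) :
    finrank F ↥(LinearMap.ker ((a.comp (LinearMap.fst F V V) +
        d.comp (LinearMap.snd F V V)).prod (a.comp (LinearMap.snd F V V)))) =
      finrank F ↥(LinearMap.ker a) +
        finrank F ↥(LinearMap.ker a ⊓ (LinearMap.range a).comap d) := by
  set Φ : (V × V) →ₗ[F] (V × V) :=
    (a.comp (LinearMap.fst F V V) + d.comp (LinearMap.snd F V V)).prod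
      (a.comp (LinearMap.snd F V V)) with hΦ
  have hmem : ∀ z : V × V, z ∈ LinearMap.ker Φ ↔ a z.1 + d z.2 = 0 ∧ a z.2 = 0 := by
    intro z
    constructor
    · intro h
      have h1 := congrArg Prod.fst h
      have h2 := congrArg Prod.snd h
      exact ⟨h1, h2⟩
    · intro ⟨h1, h2⟩
      have : Φ z = (a z.1 + d z.2, a z.2) := rfl
      rw [LinearMap.mem_ker, this, h1, h2]
      rfl
  set π : ↥(LinearMap.ker Φ) →ₗ[F] V :=
    (LinearMap.snd F V V).comp (LinearMap.ker Φ).subtype with hπ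
  have hrange : LinearMap.range π = LinearMap.ker a ⊓ (LinearMap.range a).comap d := by
    ext y
    constructor
    · rintro ⟨⟨z, hz⟩, rfl⟩
      obtain ⟨h1, h2⟩ := (hmem z).mp hz
      refine ⟨h2, ⟨-z.1, ?_⟩⟩
      show a (-z.1) = d (z.2)
      rw [map_neg, neg_eq_iff_add_eq_zero, h1]
    · rintro ⟨hy, ⟨x, hx⟩⟩
      refine ⟨⟨(-x, y), (hmem _).mpr ⟨?_, hy⟩⟩, rfl⟩
      show a (-x) + d y = 0
      rw [map_neg, hx, neg_add_cancel]
  have hkerπ : finrank F ↥(LinearMap.ker π) = finrank F ↥(LinearMap.ker a) := by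
    set ψ : ↥(LinearMap.ker π) →ₗ[F] V :=
      (LinearMap.fst F V V).comp ((LinearMap.ker Φ).subtype.comp
        (LinearMap.ker π).subtype) with hψ
    have hsnd : ∀ z : ↥(LinearMap.ker π), ((z : ↥(LinearMap.ker Φ)) : V × V).2 = 0 :=
      fun z => z.2
    have hinj : Function.Injective ψ := by
      intro z1 z2 h
      apply Subtype.ext; apply Subtype.ext
      exact Prod.ext h ((hsnd z1).trans (hsnd z2).symm)
    have hrψ : LinearMap.range ψ = LinearMap.ker a := by
      ext x
      constructor
      · rintro ⟨z, rfl⟩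
        obtain ⟨h1, _⟩ := (hmem _).mp (z : ↥(LinearMap.ker Φ)).2
        have := hsnd z
        rw [LinearMap.mem_ker]
        show a ((z : ↥(LinearMap.ker Φ)) : V × V).1 = 0
        rw [← h1, this, map_zero, add_zero]
      · intro hx
        have hx0 : a x = 0 := hx
        have hzk : ((x, 0) : V × V) ∈ LinearMap.ker Φ :=
          (hmem _).mpr ⟨by simp [hx0], by simp⟩
        have hzπ : (⟨(x, 0), hzk⟩ : ↥(LinearMap.ker Φ)) ∈ LinearMap.ker π := by
          simp [hπ, LinearMap.mem_ker]
        exact ⟨⟨⟨(x, 0), hzk⟩, hzπ⟩, rfl⟩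
    rw [← LinearMap.finrank_range_of_inj hinj, hrψ]
  have := LinearMap.finrank_range_add_finrank_ker π
  rw [hrange, hkerπ] at this
  rw [← this, add_comm]

end LinAlg

/- ### The main theorem -/

set_option maxHeartbeats 1600000 in
open Matrix Module in
/-- for squarefree `n = p₁⋯p_k ≡ 1 (mod 8)` with all `p_i ≡ 1 (mod 4)`, the Monsky
matrix `M_n` has rank `2k − 2` over `F₂` iff the Rédei matrix `R = (A | B)` has rank `k − 1`,
where `B = ([2/p₁], …, [2/p_k])ᵀ`. -/
theorem stmt_3 (k : ℕ) (p : Fin k → ℕ) (hp : ∀ i, (p i).Prime)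
    (hinj : Function.Injective p)
    (n : ℕ) (hn : n = ∏ i, p i) (hn8 : n % 8 = 1) (hp4 : ∀ i, p i % 4 = 1) :
    (monskyM k p).rank = 2 * k - 2 ↔
    (Matrix.fromCols (monskyA k p)
      (Matrix.of fun i (_ : Unit) => aLeg 2 (p i))).rank = k - 1 := by
  classical
  rcases Nat.eq_zero_or_pos k with hk0 | hk
  · subst hk0
    have h1 : (monskyM 0 p).rank = 0 := by
      have := (monskyM 0 p).rank_le_card_height
      simpa using this
    have h2 : (Matrix.fromCols (monskyA 0 p)
        (Matrix.of fun i (_ : Unit) => aLeg 2 (p i))).rank = 0 := by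
      have := (Matrix.fromCols (monskyA 0 p)
        (Matrix.of fun i (_ : Unit) => aLeg 2 (p i))).rank_le_card_height
      simpa using this
    simp [h1, h2]
  set A := monskyA k p with hA
  set D := monskyD k p 2 with hD
  set dvec : Fin k → ZMod 2 := fun i => aLeg 2 (p i) with hdvec
  set one : Fin k → ZMod 2 := fun _ => (1 : ZMod 2) with hone
  set aL := A.mulVecLin with haL
  set dL := D.mulVecLin with hdL
  set W := LinearMap.ker aL ⊓ (LinearMap.range aL).comap dL with hW
  set r := finrank (ZMod 2) ↥(LinearMap.ker aL) with hr
  set w := finrank (ZMod 2) ↥W with hw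
  -- basic matrix facts
  have hXX : ∀ X : Matrix (Fin k) (Fin k) (ZMod 2), X + X = 0 := by
    intro X
    ext i j
    simp only [Matrix.add_apply, Matrix.zero_apply]
    exact CharTwo.add_self_eq_zero _
  have hAsym : Aᵀ = A := by
    ext i j
    rw [Matrix.transpose_apply]
    by_cases hij : j = i
    · rw [hij]
    · have hji : ¬ i = j := fun h => hij h.symm
      show monskyA k p j i = monskyA k p i j
      unfold monskyA
      simp only [Matrix.of_apply, if_neg hij, if_neg hji]
      exact aLeg_symm' (p j) (p i) (hp j) (hp i) (hp4 j) (hp4 i)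
  have hD2 : monskyD k p (-2) = D := by
    have hfun : (fun i => aLeg (-2) (p i)) = fun i => aLeg 2 (p i) :=
      funext fun i => aLeg_neg_two (p i) (hp i) (hp4 i)
    rw [hD]
    unfold monskyD
    rw [hfun]
  have hA1 : A *ᵥ one = 0 := by
    funext i
    show (∑ j, A i j * one j) = 0
    simp only [hone, mul_one]
    rw [← Finset.add_sum_erase _ _ (Finset.mem_univ i)]
    have hdiag : A i i = ∑ l ∈ Finset.univ.filter (· ≠ i), aLeg (p l) (p i) := by
      show monskyA k p i i = _
      unfold monskyA
      simp
    have hoff : ∀ j ∈ Finset.univ.erase i, A i j = aLeg (p j) (p i) := by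
      intro j hj
      have hji : ¬ i = j := fun h => (Finset.mem_erase.mp hj).1 h.symm
      show monskyA k p i j = _
      unfold monskyA
      simp [if_neg hji]
    rw [hdiag, Finset.sum_congr rfl hoff, Finset.filter_ne' Finset.univ i]
    exact CharTwo.add_self_eq_zero _
  have h1ker : one ∈ LinearMap.ker aL := by
    rw [LinearMap.mem_ker, haL, Matrix.mulVecLin_apply, hA1]
  have hDone : D *ᵥ one = dvec := by
    funext i
    rw [hD]
    unfold monskyD
    rw [Matrix.mulVec_diagonal]
    simp [hone]
    rfl
  -- sum of dvec is zero
  have hsumd : ∑ i, dvec i = 0 := by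
    have h2 : ∀ i, dvec i = e8 (p i) := fun i => aLeg_two (p i) (hp i) (hp4 i)
    have h3 := e8_prod p hp4 Finset.univ
    have h4 : e8 n = 0 := by unfold e8; rw [hn8]; norm_num
    rw [hn] at h4
    rw [Finset.sum_congr rfl (fun i _ => h2 i), ← h3.2, h4]
  have hd1 : dvec ⬝ᵥ one = 0 := by
    simpa [dotProduct, hone] using hsumd
  -- dot products with the diagonal matrix
  have hdotD : ∀ x y : Fin k → ZMod 2, (D *ᵥ x) ⬝ᵥ y = ∑ i, dvec i * x i * y i := by
    intro x y
    unfold dotProduct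
    refine Finset.sum_congr rfl fun i _ => ?_
    rw [hD]
    unfold monskyD
    rw [Matrix.mulVec_diagonal]
  -- the Monsky matrix has the same rank as N = [[A, D], [0, A]]
  set N : Matrix (Fin k ⊕ Fin k) (Fin k ⊕ Fin k) (ZMod 2) := Matrix.fromBlocks A D 0 A with hN
  have hrankMN : (monskyM k p).rank = N.rank := by
    set L : Matrix (Fin k ⊕ Fin k) (Fin k ⊕ Fin k) (ZMod 2) :=
      Matrix.fromBlocks 1 0 1 1 with hL
    have hLdet : IsUnit L.det := by
      rw [hL, Matrix.det_fromBlocks_zero₁₂]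
      simp
    have hMeq : monskyM k p = Matrix.fromBlocks (A + D) D D (A + D) := by
      unfold monskyM
      rw [hD2, ← hA, ← hD]
    have e1 : (A + D) * 1 + D * 1 = A := by
      rw [mul_one, mul_one, add_assoc, hXX D, add_zero]
    have e2 : (A + D) * 0 + D * 1 = D := by rw [mul_zero, mul_one, zero_add]
    have e3 : D * 1 + (A + D) * 1 = A := by
      rw [mul_one, mul_one, add_comm, add_assoc, hXX D, add_zero]
    have e4 : D * 0 + (A + D) * 1 = A + D := by rw [mul_zero, mul_one, zero_add]
    have hML : monskyM k p * L = Matrix.fromBlocks A D A (A + D) := by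
      rw [hMeq, hL, Matrix.fromBlocks_multiply, e1, e2, e3, e4]
    have f1 : (1 : Matrix (Fin k) (Fin k) (ZMod 2)) * A + 0 * A = A := by
      rw [one_mul, zero_mul, add_zero]
    have f2 : (1 : Matrix (Fin k) (Fin k) (ZMod 2)) * D + 0 * (A + D) = D := by
      rw [one_mul, zero_mul, add_zero]
    have f3 : (1 : Matrix (Fin k) (Fin k) (ZMod 2)) * A + 1 * A = 0 := by
      rw [one_mul]
      exact hXX A
    have f4 : (1 : Matrix (Fin k) (Fin k) (ZMod 2)) * D + 1 * (A + D) = A := by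
      rw [one_mul, one_mul, add_comm, add_assoc, hXX D, add_zero]
    have hLML : L * (monskyM k p * L) = N := by
      rw [hML, hL, hN, Matrix.fromBlocks_multiply, f1, f2, f3, f4]
    calc (monskyM k p).rank = (monskyM k p * L).rank :=
          (Matrix.rank_mul_eq_left_of_isUnit_det L (monskyM k p) hLdet).symm
      _ = (L * (monskyM k p * L)).rank :=
          (Matrix.rank_mul_eq_right_of_isUnit_det L (monskyM k p * L) hLdet).symm
      _ = N.rank := by rw [hLML]
  -- the kernel of N
  set Φ : ((Fin k → ZMod 2) × (Fin k → ZMod 2)) →ₗ[ZMod 2]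
      ((Fin k → ZMod 2) × (Fin k → ZMod 2)) :=
    (aL.comp (LinearMap.fst (ZMod 2) _ _) + dL.comp (LinearMap.snd (ZMod 2) _ _)).prod
      (aL.comp (LinearMap.snd (ZMod 2) _ _)) with hΦ
  set E0 := LinearEquiv.sumArrowLequivProdArrow (Fin k) (Fin k) (ZMod 2) (ZMod 2) with hE0
  have hkerN : LinearMap.ker N.mulVecLin = Submodule.comap (E0 : _ →ₗ[ZMod 2] _)
      (LinearMap.ker Φ) := by
    ext v
    rw [LinearMap.mem_ker, Submodule.mem_comap, LinearMap.mem_ker, Matrix.mulVecLin_apply,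
      hN, Matrix.fromBlocks_mulVec]
    constructor
    · intro h
      have h1 : A *ᵥ (v ∘ Sum.inl) + D *ᵥ (v ∘ Sum.inr) = 0 :=
        funext fun i => congrFun h (Sum.inl i)
      have h2 : (0 : Matrix (Fin k) (Fin k) (ZMod 2)) *ᵥ (v ∘ Sum.inl) + A *ᵥ (v ∘ Sum.inr) = 0 :=
        funext fun i => congrFun h (Sum.inr i)
      rw [Matrix.zero_mulVec, zero_add] at h2
      show (aL (v ∘ Sum.inl) + dL (v ∘ Sum.inr), aL (v ∘ Sum.inr)) = 0
      rw [Prod.mk_eq_zero]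
      exact ⟨h1, h2⟩
    · intro h
      have h1 : aL (v ∘ Sum.inl) + dL (v ∘ Sum.inr) = 0 := congrArg Prod.fst h
      have h2 : aL (v ∘ Sum.inr) = 0 := congrArg Prod.snd h
      funext i
      rcases i with i | i
      · show (A *ᵥ (v ∘ Sum.inl) + D *ᵥ (v ∘ Sum.inr)) i = 0
        rw [show A *ᵥ (v ∘ Sum.inl) + D *ᵥ (v ∘ Sum.inr) = 0 from h1]
        rfl
      · show ((0 : Matrix (Fin k) (Fin k) (ZMod 2)) *ᵥ (v ∘ Sum.inl) + A *ᵥ (v ∘ Sum.inr)) i = 0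
        rw [Matrix.zero_mulVec, zero_add, show A *ᵥ (v ∘ Sum.inr) = 0 from h2]
        rfl
  have hkerNrank : finrank (ZMod 2) ↥(LinearMap.ker N.mulVecLin) = r + w := by
    rw [hkerN, Submodule.comap_equiv_eq_map_symm]
    rw [LinearEquiv.finrank_map_eq]
    exact finrank_ker_phi aL dL
  -- rank-nullity for N and A
  have hcountN : N.rank + (r + w) = 2 * k := by
    have h := LinearMap.finrank_range_add_finrank_ker N.mulVecLin
    rw [hkerNrank] at h
    have hdom : finrank (ZMod 2) (Fin k ⊕ Fin k → ZMod 2) = 2 * k := by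
      rw [Module.finrank_pi]
      simp [two_mul]
    rw [hdom] at h
    exact h
  have hcountA : A.rank + r = k := by
    have h := LinearMap.finrank_range_add_finrank_ker aL
    have hdom : finrank (ZMod 2) (Fin k → ZMod 2) = k := by
      rw [Module.finrank_pi]
      simp
    rw [hdom] at h
    exact h
  -- the Rédei matrix rank
  set R := Matrix.fromCols A (Matrix.of fun i (_ : Unit) => aLeg 2 (p i)) with hR
  have hRrange : LinearMap.range R.mulVecLin =
      LinearMap.range aL ⊔ Submodule.span (ZMod 2) {dvec} := by
    apply le_antisymm
    · rintro v ⟨u, rfl⟩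
      rw [Matrix.mulVecLin_apply, hR, ← Sum.elim_comp_inl_inr u,
        Matrix.fromCols_mulVec_sumElim]
      apply Submodule.add_mem_sup
      · exact ⟨u ∘ Sum.inl, rfl⟩
      · have : (Matrix.of fun i (_ : Unit) => aLeg 2 (p i)) *ᵥ (u ∘ Sum.inr) =
            (u (Sum.inr ())) • dvec := by
          funext i
          show (∑ j : Unit, aLeg 2 (p i) * (u ∘ Sum.inr) j) = _
          simp [hdvec, mul_comm]
        rw [this]
        exact Submodule.smul_mem _ _ (Submodule.mem_span_singleton_self dvec)
    · apply sup_le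
      · rintro v ⟨x, rfl⟩
        refine ⟨Sum.elim x 0, ?_⟩
        rw [Matrix.mulVecLin_apply, hR, Matrix.fromCols_mulVec_sumElim]
        have : (Matrix.of fun i (_ : Unit) => aLeg 2 (p i)) *ᵥ (0 : Unit → ZMod 2) = 0 := by
          rw [Matrix.mulVec_zero]
        rw [this, add_zero]
        rfl
      · rw [Submodule.span_le, Set.singleton_subset_iff]
        refine ⟨Sum.elim 0 (fun _ => 1), ?_⟩
        rw [Matrix.mulVecLin_apply, hR, Matrix.fromCols_mulVec_sumElim,
          Matrix.mulVec_zero, zero_add]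
        funext i
        show (∑ j : Unit, aLeg 2 (p i) * 1) = dvec i
        simp [hdvec]
  -- orthogonality characterization of the range of aL
  have hOrth : ∀ v, v ∈ LinearMap.range aL ↔
      ∀ u ∈ LinearMap.ker aL, v ⬝ᵥ u = 0 := fun v => mem_range_of_symm A hAsym v
  have hone_ne : one ≠ 0 := by
    intro h
    have := congrFun h ⟨0, hk⟩
    simp [hone] at this
  have hr1 : 1 ≤ r := by
    have hle : Submodule.span (ZMod 2) {one} ≤ LinearMap.ker aL := by
      rw [Submodule.span_le, Set.singleton_subset_iff]
      exact h1ker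
    have := Submodule.finrank_mono hle
    rwa [finrank_span_singleton hone_ne] at this
  have hWle : W ≤ LinearMap.ker aL := inf_le_left
  have hwr : w ≤ r := Submodule.finrank_mono hWle
  by_cases hdP : dvec ∈ LinearMap.range aL
  · -- case d ∈ range A
    have hRrank : R.rank = A.rank := by
      show finrank (ZMod 2) ↥(LinearMap.range R.mulVecLin) = _
      rw [hRrange, sup_eq_left.mpr (by
        rw [Submodule.span_le, Set.singleton_subset_iff]; exact hdP)]
      rfl
    have h1W : one ∈ W := by
      refine ⟨h1ker, ?_⟩
      show dL one ∈ LinearMap.range aL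
      rw [hdL, Matrix.mulVecLin_apply, hDone]
      exact hdP
    have hw1 : 1 ≤ w := by
      have hle : Submodule.span (ZMod 2) {one} ≤ W := by
        rw [Submodule.span_le, Set.singleton_subset_iff]
        exact h1W
      have := Submodule.finrank_mono hle
      rwa [finrank_span_singleton hone_ne] at this
    constructor
    · intro hLHS
      rw [hrankMN] at hLHS
      rw [hRrank]
      omega
    · intro hRHS
      rw [hRrank] at hRHS
      rw [hrankMN]
      omega
  · -- case d ∉ range A
    obtain ⟨u, hu_ker, hu_d⟩ : ∃ u ∈ LinearMap.ker aL, dvec ⬝ᵥ u ≠ 0 := by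
      by_contra h
      push_neg at h
      exact hdP ((hOrth dvec).mpr h)
    have hRrank : R.rank = A.rank + 1 := by
      show finrank (ZMod 2) ↥(LinearMap.range R.mulVecLin) = _
      rw [hRrange]
      have hd_ne : dvec ≠ 0 := by
        intro h
        exact hdP (h ▸ Submodule.zero_mem _)
      have hinf : LinearMap.range aL ⊓ Submodule.span (ZMod 2) {dvec} = ⊥ := by
        rw [eq_bot_iff]
        rintro x ⟨hx1, hx2⟩
        obtain ⟨c, rfl⟩ := Submodule.mem_span_singleton.mp hx2
        by_cases hc : c = 0
        · simp [hc]
        · exfalso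
          apply hdP
          have := Submodule.smul_mem (LinearMap.range aL) c⁻¹ hx1
          rwa [smul_smul, inv_mul_cancel₀ hc, one_smul] at this
      have := Submodule.finrank_sup_add_finrank_inf_eq (LinearMap.range aL)
        (Submodule.span (ZMod 2) {dvec})
      rw [hinf, finrank_bot, finrank_span_singleton hd_ne] at this
      rw [show A.rank = finrank (ZMod 2) ↥(LinearMap.range aL) from rfl]
      omega
    -- r ≥ 2
    have hu_not : u ∉ Submodule.span (ZMod 2) {one} := by
      intro h
      obtain ⟨c, rfl⟩ := Submodule.mem_span_singleton.mp h
      apply hu_d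
      rw [dotProduct_smul, hd1, smul_zero]
    have hS2le : Submodule.span (ZMod 2) {one, u} ≤ LinearMap.ker aL := by
      rw [Submodule.span_le]
      intro x hx
      rcases hx with h | h
      · rw [h]; exact h1ker
      · rw [Set.mem_singleton_iff.mp h]; exact hu_ker
    have hlt : Submodule.span (ZMod 2) {one} < Submodule.span (ZMod 2) {one, u} := by
      refine lt_of_le_of_ne (Submodule.span_mono (Set.singleton_subset_iff.mpr
        (Set.mem_insert one {u}))) ?_
      intro h
      exact hu_not (h ▸ Submodule.subset_span (Set.mem_insert_of_mem one rfl))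
    have hr2 : 2 ≤ r := by
      have h1 := Submodule.finrank_lt_finrank_of_lt hlt
      rw [finrank_span_singleton hone_ne] at h1
      have h2 := Submodule.finrank_mono hS2le
      omega
    -- if r = 2 then W = ⊥
    have himp : r = 2 → w = 0 := by
      intro hreq
      have hS2eq : Submodule.span (ZMod 2) {one, u} = LinearMap.ker aL := by
        apply Submodule.eq_of_le_of_finrank_le hS2le
        have h1 := Submodule.finrank_lt_finrank_of_lt hlt
        rw [finrank_span_singleton hone_ne] at h1
        omega
      have hWbot : W = ⊥ := by
        rw [eq_bot_iff]
        intro s hs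
        obtain ⟨hs_ker, hs_d⟩ := hs
        have hs_d' : dL s ∈ LinearMap.range aL := hs_d
        have horth : ∀ t ∈ LinearMap.ker aL, (dL s) ⬝ᵥ t = 0 :=
          (hOrth (dL s)).mp hs_d'
        obtain ⟨c1, c2, hc⟩ := Submodule.mem_span_pair.mp (hS2eq ▸ hs_ker)
        have hdLone : dL one = dvec := by rw [hdL, Matrix.mulVecLin_apply, hDone]
        have hdLs : dL s = c1 • dvec + c2 • (D *ᵥ u) := by
          rw [← hc, map_add, _root_.map_smul, _root_.map_smul, hdLone, hdL, Matrix.mulVecLin_apply]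
        have hDu1 : (D *ᵥ u) ⬝ᵥ one = dvec ⬝ᵥ u := by
          rw [hdotD]
          show _ = ∑ i, dvec i * u i
          exact Finset.sum_congr rfl fun i _ => by rw [hone]; ring
        have h1 : c2 * (dvec ⬝ᵥ u) = 0 := by
          have h0 := horth one h1ker
          rw [hdLs, add_dotProduct, smul_dotProduct, smul_dotProduct, hd1, smul_zero, zero_add,
            hDu1, smul_eq_mul] at h0
          exact h0
        have hc2 : c2 = 0 := by
          rcases mul_eq_zero.mp h1 with h | h
          · exact h
          · exact absurd h hu_d
        have h2 : c1 * (dvec ⬝ᵥ u) = 0 := by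
          have h0 := horth u hu_ker
          rw [hdLs, hc2, zero_smul, add_zero, smul_dotProduct, smul_eq_mul] at h0
          exact h0
        have hc1 : c1 = 0 := by
          rcases mul_eq_zero.mp h2 with h | h
          · exact h
          · exact absurd h hu_d
        rw [← hc, hc1, hc2, zero_smul, zero_smul, add_zero]
        exact Submodule.zero_mem _
      rw [hw, hWbot]
      exact finrank_bot _ _
    constructor
    · intro hLHS
      rw [hrankMN] at hLHS
      rw [hRrank]
      omega
    · intro hRHS
      rw [hRrank] at hRHS
      have hreq : r = 2 := by omega
      have := himp hreq
      rw [hrankMN]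
      omega
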